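/- arXiv:1702.05575 — 4 statements merged into one kernel-verified Lean document; each statement's English description precedes it below -/
import Mathlib

section
/- Let f₁, f₂ : K → ℝ be bounded measurable functions on a compact set K ⊆ ℝ^d with sup_{x∈K} |f₁(x) − f₂(x)| ≤ ν, and define μ_f(A) := (∫_A e^{−f})/(∫_K e^{−f}). Then for every measurable subset A ⊆ K and every ε > 0, (μ_{f₁}(A_ε) − μ_{f₁}(A)) / μ_{f₁}(A) ≥ e^{−2ν} · (μ_{f₂}(A_ε) − μ_{f₂}(A)) / μ_{f₂}(A), where A_ε := {x ∈ K : dist(x, A) ≤ ε}, provided μ_{f₁}(A) > 0 and μ_{f₂}(A) > 0. -/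
open MeasureTheory Real Metric

/-- The function-induced probability measure `μ_f(A) = (∫_A e^{-f}) / (∫_K e^{-f})`. -/
noncomputable def muF {d : ℕ} (K : Set (EuclideanSpace ℝ (Fin d)))
    (f : EuclideanSpace ℝ (Fin d) → ℝ) (A : Set (EuclideanSpace ℝ (Fin d))) : ℝ :=
  (∫ x in A, Real.exp (-(f x))) / (∫ x in K, Real.exp (-(f x)))

/-- The `ε`-enlargement of `A` inside `K`. -/
def enlarge {d : ℕ} (K A : Set (EuclideanSpace ℝ (Fin d))) (ε : ℝ) :
    Set (EuclideanSpace ℝ (Fin d)) :=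
  {x ∈ K | Metric.infDist x A ≤ ε}

theorem cheeger_ratio_stability
    {d : ℕ} (K A : Set (EuclideanSpace ℝ (Fin d)))
    (f₁ f₂ : EuclideanSpace ℝ (Fin d) → ℝ) (ν ε : ℝ)
    (hKc : IsCompact K) (hA : MeasurableSet A) (hAK : A ⊆ K)
    (hf₁ : Measurable f₁) (hf₂ : Measurable f₂)
    (hb₁ : ∃ B, ∀ x ∈ K, |f₁ x| ≤ B) (hb₂ : ∃ B, ∀ x ∈ K, |f₂ x| ≤ B)
    (hν : ∀ x ∈ K, |f₁ x - f₂ x| ≤ ν)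
    (hε : 0 < ε)
    (h₁ : 0 < muF K f₁ A) (h₂ : 0 < muF K f₂ A) :
    (muF K f₁ (enlarge K A ε) - muF K f₁ A) / muF K f₁ A
      ≥ Real.exp (-(2 * ν)) *
        ((muF K f₂ (enlarge K A ε) - muF K f₂ A) / muF K f₂ A) := by
  classical
  obtain ⟨B₁, hB₁⟩ := hb₁
  obtain ⟨B₂, hB₂⟩ := hb₂
  set E := enlarge K A ε with hEdef
  have hEK : E ⊆ K := fun x hx => hx.1
  have hAE : A ⊆ E := fun x hx =>
    ⟨hAK hx, by simpa [Metric.infDist_zero_of_mem hx] using hε.le⟩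
  have hKm : MeasurableSet K := hKc.isClosed.measurableSet
  have hEm : MeasurableSet E := by
    have : E = K ∩ {x | Metric.infDist x A ≤ ε} := rfl
    rw [this]
    exact hKm.inter (measurableSet_le (continuous_infDist_pt A).measurable measurable_const)
  have hKfin : volume K ≠ ⊤ := hKc.measure_lt_top.ne
  -- integrability
  have hint : ∀ (f : EuclideanSpace ℝ (Fin d) → ℝ) (B : ℝ), Measurable f →
      (∀ x ∈ K, |f x| ≤ B) → ∀ S : Set (EuclideanSpace ℝ (Fin d)), MeasurableSet S → S ⊆ K →
      IntegrableOn (fun x => Real.exp (-(f x))) S := by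
    intro f B hf hB S hSm hSK
    apply Measure.integrableOn_of_bounded (M := Real.exp B)
    · exact ne_top_of_le_ne_top hKfin (measure_mono hSK)
    · exact ((hf.neg.exp).aestronglyMeasurable)
    · filter_upwards [ae_restrict_mem hSm] with x hx
      rw [Real.norm_eq_abs, abs_of_pos (Real.exp_pos _)]
      exact Real.exp_le_exp.2 (le_trans (neg_le_abs _) (hB x (hSK hx)))
  have hI1 : IntegrableOn (fun x => Real.exp (-(f₁ x))) A := hint f₁ B₁ hf₁ hB₁ A hA hAK
  have hI2 : IntegrableOn (fun x => Real.exp (-(f₂ x))) A := hint f₂ B₂ hf₂ hB₂ A hA hAK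
  have hE1 : IntegrableOn (fun x => Real.exp (-(f₁ x))) E := hint f₁ B₁ hf₁ hB₁ E hEm hEK
  have hE2 : IntegrableOn (fun x => Real.exp (-(f₂ x))) E := hint f₂ B₂ hf₂ hB₂ E hEm hEK
  -- notation
  set I₁ := ∫ x in A, Real.exp (-(f₁ x)) with hI₁def
  set I₂ := ∫ x in A, Real.exp (-(f₂ x)) with hI₂def
  set N₁ := ∫ x in K, Real.exp (-(f₁ x)) with hN₁def
  set N₂ := ∫ x in K, Real.exp (-(f₂ x)) with hN₂def
  set J₁ := ∫ x in E \ A, Real.exp (-(f₁ x)) with hJ₁def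
  set J₂ := ∫ x in E \ A, Real.exp (-(f₂ x)) with hJ₂def
  have hsplit₁ : (∫ x in E, Real.exp (-(f₁ x))) = I₁ + J₁ := by
    rw [hJ₁def, integral_diff hA hE1 hAE]; ring
  have hsplit₂ : (∫ x in E, Real.exp (-(f₂ x))) = I₂ + J₂ := by
    rw [hJ₂def, integral_diff hA hE2 hAE]; ring
  -- positivity
  have hN₁nn : 0 ≤ N₁ := setIntegral_nonneg hKm fun x _ => (Real.exp_pos _).le
  have hN₂nn : 0 ≤ N₂ := setIntegral_nonneg hKm fun x _ => (Real.exp_pos _).le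
  have hN₁pos : 0 < N₁ := by
    rcases hN₁nn.lt_or_eq with h | h
    · exact h
    · exfalso; rw [muF, ← hN₁def, ← h, div_zero] at h₁; exact lt_irrefl _ h₁
  have hN₂pos : 0 < N₂ := by
    rcases hN₂nn.lt_or_eq with h | h
    · exact h
    · exfalso; rw [muF, ← hN₂def, ← h, div_zero] at h₂; exact lt_irrefl _ h₂
  have hI₁pos : 0 < I₁ := by
    have := h₁; rw [muF, ← hN₁def, ← hI₁def] at this
    exact (div_pos_iff.1 this).resolve_right (fun h => absurd h.2 (not_lt.2 hN₁nn)) |>.1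
  have hI₂pos : 0 < I₂ := by
    have := h₂; rw [muF, ← hN₂def, ← hI₂def] at this
    exact (div_pos_iff.1 this).resolve_right (fun h => absurd h.2 (not_lt.2 hN₂nn)) |>.1
  have hJ₂nn : 0 ≤ J₂ := setIntegral_nonneg (hEm.diff hA) fun x _ => (Real.exp_pos _).le
  -- pointwise comparisons integrated
  have hptA : ∀ x ∈ A, Real.exp (-(f₁ x)) ≤ Real.exp ν * Real.exp (-(f₂ x)) := by
    intro x hx
    rw [← Real.exp_add]
    apply Real.exp_le_exp.2
    have := hν x (hAK hx)
    have h := abs_le.1 this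
    linarith [h.1, h.2]
  have hptE : ∀ x ∈ E \ A, Real.exp ν * Real.exp (-(f₁ x)) ≥ Real.exp (-(f₂ x)) := by
    intro x hx
    rw [ge_iff_le, ← Real.exp_add]
    apply Real.exp_le_exp.2
    have h := abs_le.1 (hν x (hEK hx.1))
    linarith [h.1, h.2]
  have hIcomp : I₁ ≤ Real.exp ν * I₂ := by
    rw [hI₁def, hI₂def, ← integral_const_mul]
    exact setIntegral_mono_on hI1 (hI2.const_mul _) hA hptA
  have hD1 : IntegrableOn (fun x => Real.exp (-(f₁ x))) (E \ A) := hE1.mono_set Set.diff_subset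
  have hD2 : IntegrableOn (fun x => Real.exp (-(f₂ x))) (E \ A) := hE2.mono_set Set.diff_subset
  have hJcomp : J₂ ≤ Real.exp ν * J₁ := by
    rw [hJ₂def, hJ₁def, ← integral_const_mul]
    exact setIntegral_mono_on hD2 (hD1.const_mul _) (hEm.diff hA) (fun x hx => hptE x hx)
  have hJ₁nn : 0 ≤ J₁ := setIntegral_nonneg (hEm.diff hA) fun x _ => (Real.exp_pos _).le
  -- rewrite the goal
  have hmu₁E : muF K f₁ E = (I₁ + J₁) / N₁ := by rw [muF, ← hN₁def, hsplit₁]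
  have hmu₂E : muF K f₂ E = (I₂ + J₂) / N₂ := by rw [muF, ← hN₂def, hsplit₂]
  have hmu₁A : muF K f₁ A = I₁ / N₁ := rfl
  have hmu₂A : muF K f₂ A = I₂ / N₂ := rfl
  rw [hmu₁E, hmu₂E, hmu₁A, hmu₂A]
  have e₁ : ((I₁ + J₁) / N₁ - I₁ / N₁) / (I₁ / N₁) = J₁ / I₁ := by
    field_simp
    ring
  have e₂ : ((I₂ + J₂) / N₂ - I₂ / N₂) / (I₂ / N₂) = J₂ / I₂ := by
    field_simp
    ring
  rw [e₁, e₂, ge_iff_le]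
  have key : Real.exp (-(2 * ν)) * (J₂ / I₂) ≤ J₁ / I₁ := by
    rw [mul_div_assoc', div_le_div_iff₀ hI₂pos hI₁pos]
    have hexp : Real.exp (-(2 * ν)) * Real.exp ν * Real.exp ν = 1 := by
      rw [← Real.exp_add, ← Real.exp_add]
      rw [show -(2 * ν) + ν + ν = 0 by ring, Real.exp_zero]
    calc Real.exp (-(2 * ν)) * J₂ * I₁
        ≤ Real.exp (-(2 * ν)) * (Real.exp ν * J₁) * (Real.exp ν * I₂) := by
          apply mul_le_mul (mul_le_mul_of_nonneg_left hJcomp (Real.exp_pos _).le) hIcomp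
            hI₁pos.le
          positivity
      _ = (Real.exp (-(2 * ν)) * Real.exp ν * Real.exp ν) * (J₁ * I₂) := by ring
      _ = J₁ * I₂ := by rw [hexp, one_mul]
  exact key
end

section
/- Let ℓ : ℝ^d × 𝒜 → [0, B] be a measurable loss bounded in [0, B], let f(x) := (1/n) Σᵢ ℓ(x; aᵢ), let z ∼ N(0, σ² I_d), and define g(x) := (z/σ²)(ℓ(x+z; a) − ℓ(x; a)) where a is drawn uniformly from {a₁,…,a_n} independently of z. Then for any fixed x ∈ ℝ^d and any u ∈ ℝ^d with ‖u‖₂ ≤ σ/(2B), E[e^{⟨u, g(x)⟩²}] ≤ e^{(2B/σ)² ‖u‖₂²}. -/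
open MeasureTheory ProbabilityTheory Real
open scoped NNReal ENNReal

lemma aux_key (v : ℝ≥0) (hv : v ≠ 0) (t w : ℝ) :
    gaussianPDFReal 0 v w * Real.exp (t * w)
      = Real.exp (t ^ 2 * v / 2) * gaussianPDFReal (t * v) v w := by
  have hv' : (0:ℝ) < v := lt_of_le_of_ne v.coe_nonneg (by exact_mod_cast hv.symm)
  simp only [gaussianPDFReal, sub_zero]
  have hE : -w ^ 2 / (2 * (v:ℝ)) + t * w
      = t ^ 2 * v / 2 + -(w - t * v) ^ 2 / (2 * (v:ℝ)) := by
    field_simp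
    ring
  rw [mul_assoc, ← Real.exp_add, hE, Real.exp_add]
  ring

lemma aux_lintegral_exp_mul_gaussian (v : ℝ≥0) (hv : v ≠ 0) (t : ℝ) :
    ∫⁻ w, ENNReal.ofReal (Real.exp (t * w)) ∂(gaussianReal 0 v)
      = ENNReal.ofReal (Real.exp (t ^ 2 * v / 2)) := by
  rw [gaussianReal_of_var_ne_zero 0 hv,
    lintegral_withDensity_eq_lintegral_mul _ (measurable_gaussianPDF 0 v)
      (show Measurable fun w : ℝ => ENNReal.ofReal (rexp (t * w)) by fun_prop)]
  have : ∀ w, (gaussianPDF 0 v * fun w => ENNReal.ofReal (Real.exp (t * w))) w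
      = ENNReal.ofReal (Real.exp (t ^ 2 * v / 2)) * gaussianPDF (t * v) v w := by
    intro w
    simp only [Pi.mul_apply, gaussianPDF]
    rw [← ENNReal.ofReal_mul (gaussianPDFReal_nonneg _ _ _), aux_key v hv t w,
      ENNReal.ofReal_mul (Real.exp_nonneg _)]
  rw [lintegral_congr this, lintegral_const_mul _ (measurable_gaussianPDF _ v),
    lintegral_gaussianPDF_eq_one _ hv, mul_one]

lemma aux_lintegral_exp_sq_gaussian {s : ℝ} (hs0 : 0 ≤ s) (hs : s ≤ 1/4) :
    ∫⁻ w, ENNReal.ofReal (Real.exp (s * w ^ 2)) ∂(gaussianReal 0 1)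
      ≤ ENNReal.ofReal (Real.exp (4 * s)) := by
  have h1 : (0:ℝ) < 1 - 2 * s := by linarith
  set v' : ℝ≥0 := ((1 - 2*s)⁻¹).toNNReal with hv'def
  have hv' : v' ≠ 0 := by
    simp only [hv'def, ne_eq, Real.toNNReal_eq_zero, not_le]
    positivity
  have hcoe : ((v' : ℝ)) = (1 - 2*s)⁻¹ := Real.coe_toNNReal _ (by positivity)
  have key : ∀ w, gaussianPDFReal 0 1 w * Real.exp (s * w ^ 2)
      = Real.sqrt ((1 - 2*s)⁻¹) * gaussianPDFReal 0 v' w := by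
    intro w
    simp only [gaussianPDFReal, sub_zero, hcoe, NNReal.coe_one]
    have hE : -w ^ 2 / (2 * 1) + s * w ^ 2 = -w ^ 2 / (2 * (1 - 2*s)⁻¹) := by
      field_simp
      ring
    rw [mul_assoc, ← Real.exp_add, hE]
    have hC : (√(2 * π * 1))⁻¹ = Real.sqrt ((1 - 2*s)⁻¹) * (√(2 * π * (1 - 2*s)⁻¹))⁻¹ := by
      rw [Real.sqrt_mul (by positivity) ((1 - 2*s)⁻¹), mul_one]
      have h2 : Real.sqrt ((1-2*s)⁻¹) ≠ 0 := by positivity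
      field_simp
    rw [hC]
    ring
  calc ∫⁻ w, ENNReal.ofReal (Real.exp (s * w ^ 2)) ∂(gaussianReal 0 1)
      = ENNReal.ofReal (Real.sqrt ((1 - 2*s)⁻¹)) := by
        rw [gaussianReal_of_var_ne_zero 0 one_ne_zero,
          lintegral_withDensity_eq_lintegral_mul _ (measurable_gaussianPDF 0 1)
            (show Measurable fun w : ℝ => ENNReal.ofReal (rexp (s * w ^ 2)) by fun_prop)]
        have : ∀ w, (gaussianPDF 0 1 * fun w => ENNReal.ofReal (Real.exp (s * w ^ 2))) w
            = ENNReal.ofReal (Real.sqrt ((1 - 2*s)⁻¹)) * gaussianPDF 0 v' w := by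
          intro w
          simp only [Pi.mul_apply, gaussianPDF]
          rw [← ENNReal.ofReal_mul (gaussianPDFReal_nonneg _ _ _), key w,
            ENNReal.ofReal_mul (Real.sqrt_nonneg _)]
        rw [lintegral_congr this, lintegral_const_mul _ (measurable_gaussianPDF _ v'),
          lintegral_gaussianPDF_eq_one _ hv', mul_one]
    _ ≤ ENNReal.ofReal (Real.exp (4 * s)) := by
        apply ENNReal.ofReal_le_ofReal
        have h2 : (1 - 2*s)⁻¹ ≤ Real.exp (4 * s) ^ 2 := by
          have h3 : (1 - 2*s)⁻¹ ≤ 1 + 8 * s := by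
            rw [inv_le_iff_one_le_mul₀ h1]
            nlinarith
          have h4 : 1 + 8 * s ≤ Real.exp (8 * s) := by
            have := Real.add_one_le_exp (8 * s)
            linarith
          have h5 : Real.exp (4 * s) ^ 2 = Real.exp (8 * s) := by
            rw [sq, ← Real.exp_add]
            ring_nf
          linarith [h5 ▸ h4]
        calc Real.sqrt ((1 - 2*s)⁻¹) ≤ Real.sqrt (Real.exp (4 * s) ^ 2) :=
              Real.sqrt_le_sqrt h2
          _ = Real.exp (4 * s) := Real.sqrt_sq (Real.exp_nonneg _)

lemma aux_lintegral_pi_prod : ∀ {d : ℕ} (μ : Measure ℝ) [SigmaFinite μ]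
    (f : Fin d → ℝ → ℝ≥0∞) (_ : ∀ i, Measurable (f i)),
    ∫⁻ z : Fin d → ℝ, ∏ i, f i (z i) ∂(Measure.pi fun _ => μ) = ∏ i, ∫⁻ t, f i t ∂μ := by
  intro d
  induction d with
  | zero =>
    intro μ _ f hf
    simp [lintegral_const, Measure.pi_univ]
  | succ d ih =>
    intro μ _ f hf
    have A := (MeasureTheory.measurePreserving_piFinSuccAbove
      (fun _ : Fin (d+1) => μ) 0).symm
    have hmeas : Measurable fun z : Fin (d+1) → ℝ => ∏ i, f i (z i) :=
      Finset.measurable_prod _ fun i _ => (hf i).comp (measurable_pi_apply i)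
    rw [← A.lintegral_comp hmeas]
    simp only [MeasurableEquiv.piFinSuccAbove_symm_apply, Fin.insertNthEquiv,
      Fin.prod_univ_succ, Fin.insertNth_zero, Equiv.coe_fn_mk, Fin.zero_succAbove, cast_eq,
      Fin.cons_zero, Fin.cons_succ]
    rw [lintegral_prod_mul (f := f 0) (g := fun y : Fin d → ℝ => ∏ x, f x.succ (y x))
      ((hf 0).aemeasurable)
      ((Finset.measurable_prod _ fun i _ =>
        (hf i.succ).comp (measurable_pi_apply i)).aemeasurable)]
    rw [ih μ (fun i => f i.succ) (fun i => hf i.succ)]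

set_option maxHeartbeats 1000000 in
theorem smoothed_stochastic_gradient_subexponential
    {d n : ℕ} [NeZero n] {𝒜 : Type*} [MeasurableSpace 𝒜]
    (ℓ : (Fin d → ℝ) → 𝒜 → ℝ) (B σ : ℝ) (hB : 0 < B) (hσ : 0 < σ)
    (hℓm : ∀ α : 𝒜, Measurable (fun v => ℓ v α))
    (hℓ : ∀ (v : Fin d → ℝ) (α : 𝒜), ℓ v α ∈ Set.Icc 0 B)
    (a : Fin n → 𝒜)
    (x u : Fin d → ℝ) (hu : Real.sqrt (∑ i, u i ^ 2) ≤ σ / (2 * B)) :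
    (∫ p : (Fin d → ℝ) × Fin n,
        Real.exp (((∑ i, u i * p.1 i) / σ ^ 2 *
          (ℓ (x + p.1) (a p.2) - ℓ x (a p.2))) ^ 2)
      ∂((Measure.pi fun _ : Fin d => gaussianReal 0 (σ ^ 2).toNNReal).prod
          (PMF.uniformOfFintype (Fin n)).toMeasure))
      ≤ Real.exp ((2 * B / σ) ^ 2 * (∑ i, u i ^ 2)) := by
  have hσ2 : (0:ℝ) < σ ^ 2 := by positivity
  have hvσ : (σ ^ 2).toNNReal ≠ 0 := by
    simp only [ne_eq, Real.toNNReal_eq_zero, not_le]; exact hσ2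
  have hvσcoe : (((σ ^ 2).toNNReal : ℝ≥0) : ℝ) = σ ^ 2 := Real.coe_toNNReal _ hσ2.le
  set K := ∑ i, u i ^ 2 with hKdef
  have hK0 : 0 ≤ K := Finset.sum_nonneg fun i _ => sq_nonneg _
  set c := B ^ 2 / σ ^ 4 with hcdef
  have hc0 : 0 < c := by positivity
  set lam := Real.sqrt (2 * c) with hlamdef
  have hlam : lam ^ 2 = 2 * c := Real.sq_sqrt (by positivity)
  set s' := c * σ ^ 2 * K with hs'def
  have hs'0 : 0 ≤ s' := by positivity
  have hKle : K ≤ (σ / (2 * B)) ^ 2 := by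
    rw [← Real.sq_sqrt hK0]
    exact pow_le_pow_left₀ (Real.sqrt_nonneg _) hu 2
  have hs'4 : s' ≤ 1 / 4 := by
    calc s' ≤ c * σ ^ 2 * (σ / (2 * B)) ^ 2 :=
          mul_le_mul_of_nonneg_left hKle (by positivity)
      _ = 1 / 4 := by
          rw [hcdef, div_pow]
          field_simp
          ring
  -- measurability
  have hSm : Measurable (fun z : Fin d → ℝ => ∑ i, u i * z i) :=
    Finset.measurable_sum _ fun i _ => by fun_prop
  have hgm : Measurable (fun z : Fin d → ℝ =>
      ENNReal.ofReal (Real.exp (c * (∑ i, u i * z i) ^ 2))) :=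
    ((hSm.pow_const 2).const_mul c).exp.ennreal_ofReal
  have haddm : Measurable fun z : Fin d → ℝ => x + z :=
    measurable_pi_lambda _ fun i => by fun_prop
  have hFm : Measurable fun p : (Fin d → ℝ) × Fin n =>
      Real.exp (((∑ i, u i * p.1 i) / σ ^ 2 * (ℓ (x + p.1) (a p.2) - ℓ x (a p.2))) ^ 2) := by
    have hcomp : ∀ j, Measurable fun z : Fin d → ℝ => ℓ (x + z) (a j) :=
      fun j => (hℓm (a j)).comp haddm
    apply measurable_from_prod_countable_left
    intro j
    show Measurable fun z : Fin d → ℝ =>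
      Real.exp (((∑ i, u i * z i) / σ ^ 2 * (ℓ (x + z) (a j) - ℓ x (a j))) ^ 2)
    fun_prop
  have key : ∫⁻ p : (Fin d → ℝ) × Fin n,
      ENNReal.ofReal (Real.exp (((∑ i, u i * p.1 i) / σ ^ 2 *
        (ℓ (x + p.1) (a p.2) - ℓ x (a p.2))) ^ 2))
      ∂((Measure.pi fun _ : Fin d => gaussianReal 0 (σ ^ 2).toNNReal).prod
          (PMF.uniformOfFintype (Fin n)).toMeasure)
      ≤ ENNReal.ofReal (Real.exp ((2 * B / σ) ^ 2 * K)) := by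
    calc ∫⁻ p : (Fin d → ℝ) × Fin n,
        ENNReal.ofReal (Real.exp (((∑ i, u i * p.1 i) / σ ^ 2 *
          (ℓ (x + p.1) (a p.2) - ℓ x (a p.2))) ^ 2))
        ∂((Measure.pi fun _ : Fin d => gaussianReal 0 (σ ^ 2).toNNReal).prod
            (PMF.uniformOfFintype (Fin n)).toMeasure)
        ≤ ∫⁻ p : (Fin d → ℝ) × Fin n,
            ENNReal.ofReal (Real.exp (c * (∑ i, u i * p.1 i) ^ 2))
          ∂((Measure.pi fun _ : Fin d => gaussianReal 0 (σ ^ 2).toNNReal).prod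
              (PMF.uniformOfFintype (Fin n)).toMeasure) := by
          refine lintegral_mono fun p => ENNReal.ofReal_le_ofReal (Real.exp_le_exp.2 ?_)
          have hΔ : (ℓ (x + p.1) (a p.2) - ℓ x (a p.2)) ^ 2 ≤ B ^ 2 := by
            nlinarith [(hℓ (x + p.1) (a p.2)).1, (hℓ (x + p.1) (a p.2)).2,
              (hℓ x (a p.2)).1, (hℓ x (a p.2)).2]
          have hσ4 : (0:ℝ) < σ ^ 4 := by positivity
          calc ((∑ i, u i * p.1 i) / σ ^ 2 * (ℓ (x + p.1) (a p.2) - ℓ x (a p.2))) ^ 2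
              = (∑ i, u i * p.1 i) ^ 2 * (ℓ (x + p.1) (a p.2) - ℓ x (a p.2)) ^ 2 / σ ^ 4 := by
                ring
            _ ≤ (∑ i, u i * p.1 i) ^ 2 * B ^ 2 / σ ^ 4 := by gcongr
            _ = c * (∑ i, u i * p.1 i) ^ 2 := by rw [hcdef]; ring
      _ = ∫⁻ z : Fin d → ℝ, ENNReal.ofReal (Real.exp (c * (∑ i, u i * z i) ^ 2))
          ∂(Measure.pi fun _ : Fin d => gaussianReal 0 (σ ^ 2).toNNReal) := by
          rw [lintegral_prod (fun p : (Fin d → ℝ) × Fin n => ENNReal.ofReal (Real.exp (c * (∑ i, u i * p.1 i) ^ 2)))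
            ((hgm.comp measurable_fst).aemeasurable)]
          simp [lintegral_const, measure_univ]
      _ = ∫⁻ z : Fin d → ℝ, ∫⁻ w : ℝ,
            ENNReal.ofReal (Real.exp (lam * (∑ i, u i * z i) * w)) ∂(gaussianReal 0 1)
          ∂(Measure.pi fun _ : Fin d => gaussianReal 0 (σ ^ 2).toNNReal) := by
          refine lintegral_congr fun z => ?_
          rw [aux_lintegral_exp_mul_gaussian 1 one_ne_zero (lam * (∑ i, u i * z i))]
          congr 2
          rw [NNReal.coe_one, mul_pow, hlam]
          ring
      _ = ∫⁻ w : ℝ, ∫⁻ z : Fin d → ℝ,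
            ENNReal.ofReal (Real.exp (lam * (∑ i, u i * z i) * w))
          ∂(Measure.pi fun _ : Fin d => gaussianReal 0 (σ ^ 2).toNNReal)
          ∂(gaussianReal 0 1) := by
          apply lintegral_lintegral_swap
          exact (((hSm.comp measurable_fst).const_mul lam |>.mul
            measurable_snd).exp.ennreal_ofReal).aemeasurable
      _ = ∫⁻ w : ℝ, ENNReal.ofReal (Real.exp (s' * w ^ 2)) ∂(gaussianReal 0 1) := by
          refine lintegral_congr fun w => ?_
          have hsplit : ∀ z : Fin d → ℝ,
              ENNReal.ofReal (Real.exp (lam * (∑ i, u i * z i) * w))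
              = ∏ i, ENNReal.ofReal (Real.exp ((lam * w * u i) * z i)) := by
            intro z
            rw [← ENNReal.ofReal_prod_of_nonneg (fun i _ => Real.exp_nonneg _),
              ← Real.exp_sum]
            congr 1
            rw [mul_right_comm, Finset.mul_sum]
            exact congrArg rexp (Finset.sum_congr rfl fun i _ => by ring)
          rw [lintegral_congr hsplit,
            aux_lintegral_pi_prod _
              (fun i => fun t => ENNReal.ofReal (Real.exp ((lam * w * u i) * t)))
              (fun i => show Measurable fun t : ℝ =>
                ENNReal.ofReal (Real.exp ((lam * w * u i) * t)) by fun_prop)]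
          have hterm : ∀ i : Fin d, ∫⁻ t, ENNReal.ofReal (Real.exp ((lam * w * u i) * t))
              ∂(gaussianReal 0 (σ ^ 2).toNNReal)
              = ENNReal.ofReal (Real.exp ((lam * w * u i) ^ 2 * σ ^ 2 / 2)) := by
            intro i
            rw [aux_lintegral_exp_mul_gaussian _ hvσ _, hvσcoe]
          rw [Finset.prod_congr rfl fun i _ => hterm i,
            ← ENNReal.ofReal_prod_of_nonneg (fun i _ => Real.exp_nonneg _), ← Real.exp_sum]
          refine congrArg ENNReal.ofReal (congrArg rexp ?_)
          calc ∑ i, (lam * w * u i) ^ 2 * σ ^ 2 / 2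
              = ∑ i, lam ^ 2 * σ ^ 2 / 2 * w ^ 2 * u i ^ 2 :=
                Finset.sum_congr rfl fun i _ => by ring
            _ = lam ^ 2 * σ ^ 2 / 2 * w ^ 2 * K := by rw [hKdef, ← Finset.mul_sum]
            _ = s' * w ^ 2 := by rw [hlam, hs'def]; ring
      _ ≤ ENNReal.ofReal (Real.exp (4 * s')) := aux_lintegral_exp_sq_gaussian hs'0 hs'4
      _ = ENNReal.ofReal (Real.exp ((2 * B / σ) ^ 2 * K)) := by
          congr 1
          rw [hs'def, hcdef]
          field_simp
          ring
  rw [integral_eq_lintegral_of_nonneg_ae (ae_of_all _ fun p => Real.exp_nonneg _)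
    hFm.aestronglyMeasurable]
  have hfin := ENNReal.toReal_mono ENNReal.ofReal_ne_top key
  rwa [ENNReal.toReal_ofReal (Real.exp_nonneg _)] at hfin
end

section
/- Let F : ℝ^d → [0, B] be bounded, and suppose F is G-Lipschitz on K̄ := {x : dist(x, K) ≤ ρ} for a set K ⊆ ℝ^d and ρ > 0. Define F̃(x) := E_z[F(x + z)] with z ∼ N(0, σ² I_d). Then for every x ∈ K, |F̃(x) − F(x)| ≤ max{G, B/ρ} · σ · √d. (In fact |F̃(x) − F(x)| ≤ max{G, B/ρ} · E[‖z‖₂] ≤ max{G, B/ρ} · σ√d.) -/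
open MeasureTheory ProbabilityTheory Metric

/-- The standard Gaussian measure `N(0, σ² I_d)` on `ℝ^d`. -/
noncomputable def gaussMeasure (d : ℕ) (σ : ℝ) :
    Measure (EuclideanSpace ℝ (Fin d)) :=
  (Measure.pi fun _ : Fin d => gaussianReal 0 (σ ^ 2).toNNReal).map
    (MeasurableEquiv.toLp 2 (Fin d → ℝ))

open Real Set

lemma rpow_two_eq (x : ℝ) : x ^ (2:ℝ) = x ^ 2 := by
  rw [show (2:ℝ) = ((2:ℕ):ℝ) by norm_num, Real.rpow_natCast]

lemma integrable_sq_exp_full {b : ℝ} (hb : 0 < b) :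
    Integrable (fun x : ℝ => x ^ 2 * Real.exp (-b * x ^ 2)) := by
  have := integrable_rpow_mul_exp_neg_mul_sq hb (s := 2) (by norm_num)
  simpa [rpow_two_eq] using this

lemma integral_sq_exp_full {b : ℝ} (hb : 0 < b) :
    ∫ x : ℝ, x ^ 2 * Real.exp (-b * x ^ 2) = Real.sqrt π / 2 * b ^ (-(3:ℝ)/2) := by
  have hint := integrable_sq_exp_full hb
  have hIoi : ∫ x in Ioi (0:ℝ), x ^ 2 * Real.exp (-b * x ^ 2)
      = b ^ (-(3:ℝ)/2) * (1/2) * Real.Gamma (3/2) := by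
    have := integral_rpow_mul_exp_neg_mul_rpow (p := 2) (q := 2) (b := b)
      (by norm_num) (by norm_num) hb
    simp only [rpow_two_eq] at this
    rw [this]; norm_num
  have hsplit : (∫ x in Iic (0:ℝ), x ^ 2 * Real.exp (-b * x ^ 2))
      + ∫ x in Ioi (0:ℝ), x ^ 2 * Real.exp (-b * x ^ 2)
      = ∫ x : ℝ, x ^ 2 * Real.exp (-b * x ^ 2) :=
    intervalIntegral.integral_Iic_add_Ioi hint.integrableOn hint.integrableOn
  have hIic : (∫ x in Iic (0:ℝ), x ^ 2 * Real.exp (-b * x ^ 2))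
      = ∫ x in Ioi (0:ℝ), x ^ 2 * Real.exp (-b * x ^ 2) := by
    rw [← neg_zero (G := ℝ), ← integral_comp_neg_Iic]
    simp
  have hGamma : Real.Gamma (3/2) = Real.sqrt π / 2 := by
    have h := Real.Gamma_add_one (s := 1/2) (by norm_num)
    rw [show (3:ℝ)/2 = 1/2 + 1 by norm_num, h, Real.Gamma_one_half_eq]; ring
  rw [← hsplit, hIic, hIoi, hGamma]; ring

lemma gaussian_pdf_mul_sq_eq (σ : ℝ) (hσ : 0 < σ) (x : ℝ) :
    gaussianPDFReal 0 (σ^2).toNNReal x * x ^ 2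
      = (Real.sqrt (2 * π * σ^2))⁻¹ * (x ^ 2 * Real.exp (-(2 * σ^2)⁻¹ * x ^ 2)) := by
  have h2 : ((σ^2).toNNReal : ℝ) = σ^2 := Real.coe_toNNReal _ (sq_nonneg σ)
  simp only [gaussianPDFReal, sub_zero, h2]
  rw [neg_div, div_eq_inv_mul]
  ring

lemma integrable_sq_gaussianReal (σ : ℝ) (hσ : 0 < σ) :
    Integrable (fun x => x ^ 2) (gaussianReal 0 (σ^2).toNNReal) := by
  have hv : (σ^2).toNNReal ≠ 0 := by
    simp [Real.toNNReal_eq_zero, not_le, pow_pos hσ, hσ.ne']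
  rw [gaussianReal_of_var_ne_zero _ hv, gaussianPDF_def]
  have hmeas : Measurable fun x => (gaussianPDFReal 0 (σ^2).toNNReal x).toNNReal :=
    (measurable_gaussianPDFReal _ _).real_toNNReal
  simp_rw [ENNReal.ofReal]
  rw [integrable_withDensity_iff_integrable_smul hmeas]
  have : (fun x : ℝ => (gaussianPDFReal 0 (σ^2).toNNReal x).toNNReal • (x^2 : ℝ))
      = fun x => (Real.sqrt (2 * π * σ^2))⁻¹ * (x ^ 2 * Real.exp (-(2 * σ^2)⁻¹ * x ^ 2)) := by
    funext x
    rw [NNReal.smul_def, smul_eq_mul, Real.coe_toNNReal _ (gaussianPDFReal_nonneg _ _ _)]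
    exact gaussian_pdf_mul_sq_eq σ hσ x
  rw [this]
  exact (integrable_sq_exp_full (by positivity)).const_mul _

lemma integral_sq_gaussianReal (σ : ℝ) (hσ : 0 < σ) :
    ∫ x, x ^ 2 ∂(gaussianReal 0 (σ^2).toNNReal) = σ ^ 2 := by
  have hv : (σ^2).toNNReal ≠ 0 := by
    simp [Real.toNNReal_eq_zero, not_le, pow_pos hσ, hσ.ne']
  rw [gaussianReal_of_var_ne_zero _ hv, gaussianPDF_def]
  have hmeas : Measurable fun x => (gaussianPDFReal 0 (σ^2).toNNReal x).toNNReal :=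
    (measurable_gaussianPDFReal _ _).real_toNNReal
  simp_rw [ENNReal.ofReal]
  rw [integral_withDensity_eq_integral_smul hmeas]
  have heq : (fun x : ℝ => (gaussianPDFReal 0 (σ^2).toNNReal x).toNNReal • (x^2 : ℝ))
      = fun x => (Real.sqrt (2 * π * σ^2))⁻¹ * (x ^ 2 * Real.exp (-(2 * σ^2)⁻¹ * x ^ 2)) := by
    funext x
    rw [NNReal.smul_def, smul_eq_mul, Real.coe_toNNReal _ (gaussianPDFReal_nonneg _ _ _)]
    exact gaussian_pdf_mul_sq_eq σ hσ x
  rw [heq, integral_const_mul, integral_sq_exp_full (by positivity)]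
  -- algebra
  have hs : (0:ℝ) < 2 * σ^2 := by positivity
  have hrw : ((2 * σ^2)⁻¹ : ℝ) ^ (-(3:ℝ)/2) = (2 * σ^2) * Real.sqrt (2 * σ^2) := by
    rw [Real.inv_rpow hs.le, ← Real.rpow_neg hs.le, neg_div, neg_neg,
      show (3:ℝ)/2 = 1 + 1/2 by norm_num, Real.rpow_add hs, Real.rpow_one,
      ← Real.sqrt_eq_rpow]
  rw [hrw]
  have h1 : Real.sqrt (2 * π * σ^2) = Real.sqrt π * Real.sqrt (2 * σ^2) := by
    rw [← Real.sqrt_mul pi_nonneg]; ring_nf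
  have h2 : Real.sqrt (2 * σ^2) * Real.sqrt (2 * σ^2) = 2 * σ^2 :=
    Real.mul_self_sqrt hs.le
  have hπ : (0:ℝ) < Real.sqrt π := Real.sqrt_pos.mpr pi_pos
  have hsq : (0:ℝ) < Real.sqrt (2 * σ^2) := Real.sqrt_pos.mpr hs
  rw [h1]
  field_simp

lemma pi_map_eval {ι : Type*} [Fintype ι] {α : ι → Type*} [∀ i, MeasurableSpace (α i)]
    (μ : ∀ i, Measure (α i)) [∀ i, IsProbabilityMeasure (μ i)] (i : ι) :
    (Measure.pi μ).map (Function.eval i) = μ i := by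
  classical
  ext s hs
  rw [Measure.map_apply (measurable_pi_apply i) hs, Set.eval_preimage, Measure.pi_pi]
  rw [Fintype.prod_eq_single i (fun j hj => by simp [Function.update_of_ne hj])]
  simp


instance (d : ℕ) (σ : ℝ) : IsProbabilityMeasure (gaussMeasure d σ) :=
  Measure.isProbabilityMeasure_map (MeasurableEquiv.toLp 2 (Fin d → ℝ)).measurable.aemeasurable

lemma integrable_eval_sq (d : ℕ) (σ : ℝ) (hσ : 0 < σ) (i : Fin d) :
    Integrable (fun y : Fin d → ℝ => (y i) ^ 2)
      (Measure.pi fun _ : Fin d => gaussianReal 0 (σ ^ 2).toNNReal) := by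
  have h := integrable_sq_gaussianReal σ hσ
  rw [← pi_map_eval (fun _ : Fin d => gaussianReal 0 (σ ^ 2).toNNReal) i] at h
  exact (integrable_map_measure ((measurable_id.pow_const 2).aestronglyMeasurable)
    (measurable_pi_apply i).aemeasurable).mp h

lemma norm_symm_sq (d : ℕ) (x : Fin d → ℝ) :
    ‖(MeasurableEquiv.toLp 2 (Fin d → ℝ)) x‖ ^ 2 = ∑ i, (x i) ^ 2 := by
  rw [EuclideanSpace.norm_eq]
  rw [Real.sq_sqrt (by positivity)]
  have : ∀ i, (MeasurableEquiv.toLp 2 (Fin d → ℝ)) x i = x i := fun _ => rfl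
  simp [this, Real.norm_eq_abs, sq_abs]

lemma integral_normsq_gaussMeasure (d : ℕ) (σ : ℝ) (hσ : 0 < σ) :
    ∫ z, ‖z‖ ^ 2 ∂(gaussMeasure d σ) = d * σ ^ 2 := by
  rw [gaussMeasure, integral_map_equiv]
  simp_rw [norm_symm_sq]
  rw [integral_finset_sum _ (fun i _ => integrable_eval_sq d σ hσ i)]
  have : ∀ i : Fin d, ∫ y : Fin d → ℝ, (y i) ^ 2
      ∂(Measure.pi fun _ : Fin d => gaussianReal 0 (σ ^ 2).toNNReal) = σ ^ 2 := by
    intro i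
    have h := integral_map (φ := Function.eval i)
      (μ := Measure.pi fun _ : Fin d => gaussianReal 0 (σ ^ 2).toNNReal)
      (f := fun t : ℝ => t ^ 2) (measurable_pi_apply i).aemeasurable
      ((measurable_id.pow_const 2).aestronglyMeasurable)
    rw [pi_map_eval] at h
    rw [← h, integral_sq_gaussianReal σ hσ]
  simp [this]

lemma integrable_normsq_gaussMeasure (d : ℕ) (σ : ℝ) (hσ : 0 < σ) :
    Integrable (fun z => ‖z‖ ^ 2) (gaussMeasure d σ) := by
  rw [gaussMeasure]
  rw [integrable_map_equiv]
  have : ((fun z : EuclideanSpace ℝ (Fin d) => ‖z‖ ^ 2) ∘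
      (MeasurableEquiv.toLp 2 (Fin d → ℝ))) = fun x => ∑ i, (x i) ^ 2 := by
    funext x; exact norm_symm_sq d x
  rw [this]
  exact integrable_finset_sum _ (fun i _ => integrable_eval_sq d σ hσ i)

theorem gaussian_smoothing_close_to_population
    {d : ℕ} (F : EuclideanSpace ℝ (Fin d) → ℝ) (hF : Measurable F)
    (K : Set (EuclideanSpace ℝ (Fin d)))
    (B G ρ σ : ℝ) (hB : 0 < B) (hG : 0 < G) (hρ : 0 < ρ) (hσ : 0 < σ)
    (hrange : ∀ x, F x ∈ Set.Icc 0 B)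
    (hLip : ∀ x y : EuclideanSpace ℝ (Fin d),
      Metric.infDist x K ≤ ρ → Metric.infDist y K ≤ ρ →
      |F x - F y| ≤ G * ‖x - y‖) :
    ∀ x ∈ K,
      |(∫ z, F (x + z) ∂(gaussMeasure d σ)) - F x|
        ≤ max G (B / ρ) * σ * Real.sqrt d := by
  intro x hx
  set μ := gaussMeasure d σ with hμ
  set M := max G (B / ρ) with hM
  have hM0 : 0 < M := lt_of_lt_of_le hG (le_max_left _ _)
  -- trivial case d = 0
  rcases Nat.eq_zero_or_pos d with hd | hd
  · subst hd
    have hz : ∀ z : EuclideanSpace ℝ (Fin 0), x + z = x := fun z => Subsingleton.elim _ _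
    simp only [hz]
    rw [integral_const]
    simp only [probReal_univ, one_smul, sub_self, abs_zero]
    positivity
  -- pointwise bound
  have hpt : ∀ z : EuclideanSpace ℝ (Fin d), |F (x + z) - F x| ≤ M * ‖z‖ := by
    intro z
    have hxK : Metric.infDist x K ≤ ρ := by
      rw [Metric.infDist_zero_of_mem hx]; exact hρ.le
    by_cases h : Metric.infDist (x + z) K ≤ ρ
    · calc |F (x + z) - F x| ≤ G * ‖(x + z) - x‖ := hLip _ _ h hxK
        _ = G * ‖z‖ := by rw [add_sub_cancel_left]
        _ ≤ M * ‖z‖ := mul_le_mul_of_nonneg_right (le_max_left _ _) (norm_nonneg _)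
    · push_neg at h
      have hzρ : ρ ≤ ‖z‖ := by
        have h1 : Metric.infDist (x + z) K ≤ Metric.infDist x K + dist (x + z) x :=
          Metric.infDist_le_infDist_add_dist
        have h2 : dist (x + z) x = ‖z‖ := by
          rw [dist_eq_norm, add_sub_cancel_left]
        rw [Metric.infDist_zero_of_mem hx, zero_add, h2] at h1
        linarith
      have hFb : |F (x + z) - F x| ≤ B := by
        have h1 := hrange (x + z); have h2 := hrange x
        rw [abs_sub_le_iff]
        constructor <;> [linarith [h1.2, h2.1]; linarith [h1.1, h2.2]]
      calc |F (x + z) - F x| ≤ B := hFb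
        _ = (B / ρ) * ρ := by field_simp
        _ ≤ (B / ρ) * ‖z‖ := mul_le_mul_of_nonneg_left hzρ (by positivity)
        _ ≤ M * ‖z‖ := mul_le_mul_of_nonneg_right (le_max_right _ _) (norm_nonneg _)
  -- integrability
  have hmeasFx : Measurable fun z : EuclideanSpace ℝ (Fin d) => F (x + z) :=
    hF.comp (measurable_const.add measurable_id)
  have hFint : Integrable (fun z => F (x + z)) μ := by
    refine Integrable.mono' (integrable_const B) hmeasFx.aestronglyMeasurable
      (ae_of_all _ fun z => ?_)
    have h1 := hrange (x + z)
    rw [Real.norm_eq_abs, abs_le]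
    exact ⟨by linarith [h1.1], h1.2⟩
  have hnsq : Integrable (fun z => ‖z‖ ^ 2) μ := integrable_normsq_gaussMeasure d σ hσ
  set t : ℝ := σ * Real.sqrt d with ht
  have ht0 : 0 < t := by
    have : (0:ℝ) < Real.sqrt d := Real.sqrt_pos.mpr (by exact_mod_cast hd)
    positivity
  have hnormle : ∀ z : EuclideanSpace ℝ (Fin d), ‖z‖ ≤ t / 2 + ‖z‖ ^ 2 / (2 * t) := by
    intro z
    have h := sq_nonneg (t - ‖z‖)
    rw [div_add_div _ _ (by norm_num) (by positivity), le_div_iff₀ (by positivity)]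
    nlinarith
  have hnorm_int : Integrable (fun z : EuclideanSpace ℝ (Fin d) => ‖z‖) μ := by
    refine Integrable.mono' ((integrable_const (t / 2)).add (hnsq.div_const (2 * t)))
      (measurable_norm.aestronglyMeasurable) (ae_of_all _ fun z => ?_)
    rw [Real.norm_eq_abs, abs_of_nonneg (norm_nonneg _)]
    exact hnormle z
  have hEnorm : ∫ z, ‖z‖ ∂μ ≤ t := by
    calc ∫ z, ‖z‖ ∂μ ≤ ∫ z, (t / 2 + ‖z‖ ^ 2 / (2 * t)) ∂μ :=
          integral_mono hnorm_int ((integrable_const (t / 2)).add (hnsq.div_const (2 * t)))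
            hnormle
      _ = t / 2 + (∫ z, ‖z‖ ^ 2 ∂μ) / (2 * t) := by
          rw [integral_add (integrable_const _) (hnsq.div_const _), integral_const,
            integral_div, probReal_univ]
          simp
      _ = t := by
          rw [hμ, integral_normsq_gaussMeasure d σ hσ, ht]
          rw [div_add_div _ _ (by norm_num) (by positivity)]
          rw [div_eq_iff (by positivity)]
          have hds : Real.sqrt d * Real.sqrt d = (d : ℝ) :=
            Real.mul_self_sqrt (Nat.cast_nonneg d)
          nlinarith
  -- main chain
  have hconst : ∫ _z, F x ∂μ = F x := by
    rw [integral_const, probReal_univ]; simp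
  rw [← hconst, ← integral_sub hFint (integrable_const _)]
  calc |∫ z, (F (x + z) - F x) ∂μ| ≤ ∫ z, |F (x + z) - F x| ∂μ := by
        simpa [Real.norm_eq_abs] using
          norm_integral_le_integral_norm (fun z => F (x + z) - F x) (μ := μ)
    _ ≤ ∫ z, M * ‖z‖ ∂μ :=
        integral_mono (hFint.sub (integrable_const _)).abs (hnorm_int.const_mul M)
          fun z => hpt z
    _ = M * ∫ z, ‖z‖ ∂μ := integral_const_mul _ _
    _ ≤ M * t := mul_le_mul_of_nonneg_left hEnorm hM0.le
    _ = M * σ * Real.sqrt d := by rw [ht, mul_assoc]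
end

section
/- Let X follow the chi-square distribution with d degrees of freedom. Then for every x > 0, P(X ≥ d(1 + 2√x + 2x)) ≤ e^{−x d} and P(X ≤ d(1 − 2√x)) ≤ e^{−x d}. -/
open MeasureTheory ProbabilityTheory
open scoped ENNReal

/-! ### Calculus lemmas -/

lemma lm_log_le (s : ℝ) (hs : 0 ≤ s) :
    Real.log (1 + 2 * s) ≤ 2 * s * (1 + s) / (1 + 2 * s) := by
  have key : MonotoneOn (fun t : ℝ => 2 * t * (1 + t) / (1 + 2 * t) - Real.log (1 + 2 * t))
      (Set.Ici 0) := by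
    have hderiv : ∀ t : ℝ, 0 < t → HasDerivAt
        (fun t : ℝ => 2 * t * (1 + t) / (1 + 2 * t) - Real.log (1 + 2 * t))
        (((2 + 4 * t) * (1 + 2 * t) - (2 * t * (1 + t)) * 2) / (1 + 2 * t) ^ 2
          - 2 / (1 + 2 * t)) t := by
      intro t ht
      have h1 : (0:ℝ) < 1 + 2 * t := by linarith
      have hnum : HasDerivAt (fun t : ℝ => 2 * t * (1 + t)) (2 + 4 * t) t := by
        have h := ((hasDerivAt_id t).const_mul 2).mul ((hasDerivAt_id t).const_add 1)
        convert h using 1 <;> (try rfl) <;> simp <;> ring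
      have hden : HasDerivAt (fun t : ℝ => 1 + 2 * t) 2 t := by
        have h := ((hasDerivAt_id t).const_mul 2).const_add 1
        convert h using 1 <;> (try rfl) <;> simp
      have hdiv := hnum.div hden h1.ne'
      have hlog := hden.log h1.ne'
      exact hdiv.sub (by simpa using hlog)
    apply monotoneOn_of_deriv_nonneg (convex_Ici 0)
    · apply ContinuousOn.sub
      · apply ContinuousOn.div (by fun_prop) (by fun_prop)
        intro t ht
        simp only [Set.mem_Ici] at ht; positivity
      · apply ContinuousOn.log (by fun_prop)
        intro t ht
        simp only [Set.mem_Ici] at ht; positivity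
    · intro t ht
      rw [interior_Ici] at ht
      exact ((hderiv t ht).differentiableAt).differentiableWithinAt
    · intro t ht
      rw [interior_Ici] at ht
      rw [(hderiv t ht).deriv]
      have h1 : (0:ℝ) < 1 + 2 * t := by linarith [(Set.mem_Ioi.mp ht).le]
      have : ((2 + 4 * t) * (1 + 2 * t) - (2 * t * (1 + t)) * 2) / (1 + 2 * t) ^ 2
          - 2 / (1 + 2 * t) = 4 * t ^ 2 / (1 + 2 * t) ^ 2 := by
        field_simp; ring
      rw [this]; positivity
  have h0 : (0:ℝ) ∈ Set.Ici (0:ℝ) := Set.self_mem_Ici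
  have hsmem : s ∈ Set.Ici (0:ℝ) := hs
  have := key h0 hsmem hs
  simp only [mul_zero, zero_mul, zero_div, add_zero, mul_one, zero_add, Real.log_one,
    sub_zero, zero_sub] at this
  linarith

lemma lm_le_log (s : ℝ) (hs : 0 ≤ s) :
    2 * s - 2 * s ^ 2 ≤ Real.log (1 + 2 * s) := by
  have key : MonotoneOn (fun t : ℝ => Real.log (1 + 2 * t) - (2 * t - 2 * t ^ 2))
      (Set.Ici 0) := by
    have hderiv : ∀ t : ℝ, 0 < t → HasDerivAt
        (fun t : ℝ => Real.log (1 + 2 * t) - (2 * t - 2 * t ^ 2))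
        (2 / (1 + 2 * t) - (2 - 2 * (2 * t ^ 1))) t := by
      intro t ht
      have h1 : (0:ℝ) < 1 + 2 * t := by linarith
      have hden : HasDerivAt (fun t : ℝ => 1 + 2 * t) 2 t := by
        have h := ((hasDerivAt_id t).const_mul 2).const_add 1
        convert h using 1 <;> (try rfl) <;> simp
      have hlog := hden.log h1.ne'
      have hpoly : HasDerivAt (fun t : ℝ => 2 * t - 2 * t ^ 2) (2 - 2 * (2 * t ^ 1)) t := by
        have h := (((hasDerivAt_id t).const_mul 2)).sub ((hasDerivAt_pow 2 t).const_mul 2)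
        convert h using 1 <;> (try rfl) <;> simp <;> ring
      exact hlog.sub hpoly
    apply monotoneOn_of_deriv_nonneg (convex_Ici 0)
    · apply ContinuousOn.sub
      · apply ContinuousOn.log (by fun_prop)
        intro t ht
        simp only [Set.mem_Ici] at ht; positivity
      · fun_prop
    · intro t ht
      rw [interior_Ici] at ht
      exact ((hderiv t ht).differentiableAt).differentiableWithinAt
    · intro t ht
      rw [interior_Ici] at ht
      rw [(hderiv t ht).deriv]
      have h1 : (0:ℝ) < 1 + 2 * t := by linarith [(Set.mem_Ioi.mp ht).le]
      have : 2 / (1 + 2 * t) - (2 - 2 * (2 * t ^ 1)) = 8 * t ^ 2 / (1 + 2 * t) := by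
        field_simp; ring
      rw [this]; positivity
  have h0 : (0:ℝ) ∈ Set.Ici (0:ℝ) := Set.self_mem_Ici
  have hsmem : s ∈ Set.Ici (0:ℝ) := hs
  have := key h0 hsmem hs
  norm_num at this
  linarith

/-! ### Gaussian moment generating function for the square -/

lemma lm_lintegral_exp_sq (l : ℝ) (hl : l < 1 / 2) :
    ∫⁻ z : ℝ, ENNReal.ofReal (Real.exp (l * z ^ 2)) ∂(gaussianReal 0 1)
      = ENNReal.ofReal (1 / Real.sqrt (1 - 2 * l)) := by
  have hb : (0:ℝ) < 1 / 2 - l := by linarith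
  rw [gaussianReal_of_var_ne_zero 0 one_ne_zero]
  rw [lintegral_withDensity_eq_lintegral_mul _ (measurable_gaussianPDF 0 1)
    (by measurability)]
  have hfun : ∀ z : ℝ, (gaussianPDF 0 1 * fun z => ENNReal.ofReal (Real.exp (l * z ^ 2))) z
      = ENNReal.ofReal ((Real.sqrt (2 * Real.pi))⁻¹ * Real.exp (-(1 / 2 - l) * z ^ 2)) := by
    intro z
    simp only [Pi.mul_apply, gaussianPDF_def]
    rw [← ENNReal.ofReal_mul (gaussianPDFReal_nonneg 0 1 z)]
    congr 1
    rw [gaussianPDFReal]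
    simp only [NNReal.coe_one, mul_one, sub_zero]
    rw [mul_assoc, ← Real.exp_add]
    congr 2
    ring
  simp_rw [hfun]
  rw [← ofReal_integral_eq_lintegral_ofReal
    ((integrable_exp_neg_mul_sq hb).const_mul _)
    (ae_of_all _ fun z => by positivity)]
  congr 1
  rw [MeasureTheory.integral_const_mul, integral_gaussian]
  have hπ : (0:ℝ) < Real.pi := Real.pi_pos
  have h1 : Real.pi / (1 / 2 - l) = (2 * Real.pi) * (1 - 2 * l)⁻¹ := by
    field_simp
  rw [h1, ← Real.sqrt_inv (2 * Real.pi),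
    ← Real.sqrt_mul (by positivity : (0:ℝ) ≤ (2 * Real.pi)⁻¹), one_div, ← Real.sqrt_inv]
  congr 1
  rw [← mul_assoc, inv_mul_cancel₀ (by positivity : (2 * Real.pi) ≠ 0), one_mul]

/-! ### Product over coordinates -/

lemma lm_lintegral_pi_prod (μ : Measure ℝ) [SigmaFinite μ] {f : ℝ → ℝ≥0∞}
    (hf : Measurable f) :
    ∀ d : ℕ, ∫⁻ z : Fin d → ℝ, ∏ i, f (z i) ∂(Measure.pi fun _ => μ)
      = (∫⁻ x, f x ∂μ) ^ d := by
  intro d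
  induction d with
  | zero => simp [lintegral_const]
  | succ d ih =>
    have hmp := measurePreserving_piFinSuccAbove (fun _ : Fin (d + 1) => μ) 0
    have hg : Measurable (fun p : ℝ × (Fin d → ℝ) => f p.1 * ∏ j, f (p.2 j)) := by
      apply Measurable.mul (hf.comp measurable_fst)
      exact Finset.measurable_prod _ fun j _ =>
        hf.comp ((measurable_pi_apply j).comp measurable_snd)
    calc ∫⁻ z : Fin (d + 1) → ℝ, ∏ i, f (z i) ∂(Measure.pi fun _ => μ)
        = ∫⁻ z : Fin (d + 1) → ℝ,
            (fun p : ℝ × (Fin d → ℝ) => f p.1 * ∏ j, f (p.2 j))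
              (MeasurableEquiv.piFinSuccAbove (fun _ => ℝ) 0 z)
            ∂(Measure.pi fun _ => μ) := by
          congr 1; funext z
          simp [MeasurableEquiv.piFinSuccAbove_apply, Fin.prod_univ_succ, Fin.tail,
            Fin.zero_succAbove]
      _ = ∫⁻ p : ℝ × (Fin d → ℝ), f p.1 * ∏ j, f (p.2 j)
            ∂(μ.prod (Measure.pi fun _ : Fin d => μ)) := by
          rw [← hmp.map_eq, lintegral_map hg (MeasurableEquiv.measurable _)]
      _ = (∫⁻ x, f x ∂μ) * ∫⁻ z : Fin d → ℝ, ∏ j, f (z j) ∂(Measure.pi fun _ => μ) := by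
          exact lintegral_prod_mul hf.aemeasurable
            ((Finset.measurable_prod _ fun j _ =>
              hf.comp (measurable_pi_apply j)).aemeasurable)
      _ = (∫⁻ x, f x ∂μ) ^ (d + 1) := by rw [ih, pow_succ]; ring

lemma lm_lintegral_exp_sum_sq (d : ℕ) (l : ℝ) (hl : l < 1 / 2) :
    ∫⁻ z : Fin d → ℝ, ENNReal.ofReal (Real.exp (l * ∑ i, z i ^ 2))
        ∂(Measure.pi fun _ : Fin d => gaussianReal 0 1)
      = ENNReal.ofReal (1 / Real.sqrt (1 - 2 * l)) ^ d := by
  have h1 : ∀ z : Fin d → ℝ, ENNReal.ofReal (Real.exp (l * ∑ i, z i ^ 2))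
      = ∏ i, ENNReal.ofReal (Real.exp (l * z i ^ 2)) := by
    intro z
    rw [Finset.mul_sum, Real.exp_sum, ENNReal.ofReal_prod_of_nonneg
      (fun i _ => (Real.exp_pos _).le)]
  simp_rw [h1]
  have h2 : (∫⁻ y : ℝ, ENNReal.ofReal (Real.exp (l * y ^ 2)) ∂(gaussianReal 0 1)) ^ d
      = ENNReal.ofReal (1 / Real.sqrt (1 - 2 * l)) ^ d := by
    rw [lm_lintegral_exp_sq l hl]
  exact (lm_lintegral_pi_prod (gaussianReal 0 1) (by measurability) d).trans h2

/-! ### Chernoff helper -/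

lemma lm_chernoff {α : Type*} [MeasurableSpace α] (μ : Measure α) {f : α → ℝ≥0∞}
    (hf : Measurable f) (c : ℝ) {s : Set α}
    (hs : s ⊆ {z | ENNReal.ofReal (Real.exp c) ≤ f z}) :
    μ s ≤ ENNReal.ofReal (Real.exp (-c)) * ∫⁻ z, f z ∂μ := by
  set r := ENNReal.ofReal (Real.exp c) with hr
  have hr0 : r ≠ 0 := by
    simp [hr, ENNReal.ofReal_eq_zero, not_le, Real.exp_pos]
  have hrt : r ≠ ⊤ := ENNReal.ofReal_ne_top
  have h2 := mul_meas_ge_le_lintegral₀ (μ := μ) hf.aemeasurable r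
  calc μ s ≤ μ {z | r ≤ f z} := measure_mono hs
    _ = r⁻¹ * (r * μ {z | r ≤ f z}) := by
        rw [← mul_assoc, ENNReal.inv_mul_cancel hr0 hrt, one_mul]
    _ ≤ r⁻¹ * ∫⁻ z, f z ∂μ := mul_le_mul_right h2 _
    _ = ENNReal.ofReal (Real.exp (-c)) * ∫⁻ z, f z ∂μ := by
        rw [Real.exp_neg, ENNReal.ofReal_inv_of_pos (Real.exp_pos c), hr]

theorem chi_square_laurent_massart (d : ℕ) (x : ℝ) (hx : 0 < x) :
    (Measure.pi fun _ : Fin d => gaussianReal 0 1)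
        {z : Fin d → ℝ | (d : ℝ) * (1 + 2 * Real.sqrt x + 2 * x) ≤ ∑ i, z i ^ 2}
      ≤ ENNReal.ofReal (Real.exp (-(x * d))) ∧
    (Measure.pi fun _ : Fin d => gaussianReal 0 1)
        {z : Fin d → ℝ | ∑ i, z i ^ 2 ≤ (d : ℝ) * (1 - 2 * Real.sqrt x)}
      ≤ ENNReal.ofReal (Real.exp (-(x * d))) := by
  set μ := Measure.pi fun _ : Fin d => gaussianReal 0 1 with hμ
  set s := Real.sqrt x with hsx
  have hs : 0 < s := Real.sqrt_pos.2 hx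
  have hs2 : s ^ 2 = x := Real.sq_sqrt hx.le
  have h12s : (0:ℝ) < 1 + 2 * s := by linarith
  have hSmeas : Measurable fun z : Fin d → ℝ => ∑ i, z i ^ 2 :=
    Finset.measurable_sum _ fun i _ => (measurable_pi_apply i).pow_const 2
  constructor
  · -- upper tail
    set l := s / (1 + 2 * s) with hl
    have hl0 : 0 ≤ l := by positivity
    have hlhalf : l < 1 / 2 := by
      rw [hl, div_lt_iff₀ h12s]; linarith
    set a := (d : ℝ) * (1 + 2 * s + 2 * x) with ha
    have hsub : {z : Fin d → ℝ | a ≤ ∑ i, z i ^ 2}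
        ⊆ {z | ENNReal.ofReal (Real.exp (l * a))
            ≤ ENNReal.ofReal (Real.exp (l * ∑ i, z i ^ 2))} := by
      intro z hz
      exact ENNReal.ofReal_le_ofReal (Real.exp_le_exp.2
        (mul_le_mul_of_nonneg_left hz hl0))
    have hch := lm_chernoff μ (f := fun z : Fin d → ℝ =>
        ENNReal.ofReal (Real.exp (l * ∑ i, z i ^ 2)))
      (by measurability) (l * a) hsub
    rw [hμ] at hch
    rw [lm_lintegral_exp_sum_sq d l hlhalf] at hch
    refine le_trans hch ?_
    -- reduce to real inequality
    have hc0 : (0:ℝ) ≤ 1 / Real.sqrt (1 - 2 * l) := by positivity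
    rw [← ENNReal.ofReal_pow hc0, ← ENNReal.ofReal_mul (Real.exp_pos _).le]
    apply ENNReal.ofReal_le_ofReal
    -- compute 1 - 2l = 1/(1+2s)
    have h1m2l : 1 - 2 * l = (1 + 2 * s)⁻¹ := by
      rw [hl]; field_simp; ring
    have hcval : 1 / Real.sqrt (1 - 2 * l) = Real.sqrt (1 + 2 * s) := by
      rw [h1m2l, Real.sqrt_inv, one_div, inv_inv]
    rw [hcval]
    -- per-coordinate bound
    set t := l * (1 + 2 * s + 2 * s ^ 2) - s ^ 2 with hT
    have hkey : Real.sqrt (1 + 2 * s) ≤ Real.exp t := by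
      have h2t : 2 * t = 2 * s * (1 + s) / (1 + 2 * s) := by
        rw [hT, hl]; field_simp; ring
      have hlog := lm_log_le s hs.le
      have hle : 1 + 2 * s ≤ Real.exp (2 * t) := by
        rw [h2t]
        calc 1 + 2 * s = Real.exp (Real.log (1 + 2 * s)) := (Real.exp_log h12s).symm
          _ ≤ Real.exp (2 * s * (1 + s) / (1 + 2 * s)) := Real.exp_le_exp.2 hlog
      calc Real.sqrt (1 + 2 * s) ≤ Real.sqrt (Real.exp (2 * t)) := Real.sqrt_le_sqrt hle
        _ = Real.exp t := by
          rw [show (2:ℝ) * t = t + t by ring, Real.exp_add, Real.sqrt_mul_self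
            (Real.exp_pos t).le]
    have hpow : Real.sqrt (1 + 2 * s) ^ d ≤ Real.exp t ^ d :=
      pow_le_pow_left₀ (Real.sqrt_nonneg _) hkey d
    calc Real.exp (-(l * a)) * Real.sqrt (1 + 2 * s) ^ d
        ≤ Real.exp (-(l * a)) * Real.exp t ^ d := by
          exact mul_le_mul_of_nonneg_left hpow (Real.exp_pos _).le
      _ = Real.exp (-(l * a) + d * t) := by
          rw [← Real.exp_nat_mul, ← Real.exp_add]
      _ = Real.exp (-(x * d)) := by
          congr 1
          rw [ha, hT, ← hs2]; ring
  · -- lower tail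
    set a := (d : ℝ) * (1 - 2 * s) with ha
    have hsub : {z : Fin d → ℝ | ∑ i, z i ^ 2 ≤ a}
        ⊆ {z | ENNReal.ofReal (Real.exp (-s * a))
            ≤ ENNReal.ofReal (Real.exp (-s * ∑ i, z i ^ 2))} := by
      intro z hz
      refine ENNReal.ofReal_le_ofReal (Real.exp_le_exp.2 ?_)
      have : ∑ i, z i ^ 2 ≤ a := hz
      nlinarith [hs.le]
    have hch := lm_chernoff μ (f := fun z : Fin d → ℝ =>
        ENNReal.ofReal (Real.exp (-s * ∑ i, z i ^ 2)))
      (by measurability) (-s * a) hsub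
    rw [hμ] at hch
    have hneg : (-s : ℝ) < 1 / 2 := by linarith
    rw [lm_lintegral_exp_sum_sq d (-s) hneg] at hch
    refine le_trans hch ?_
    have hc0 : (0:ℝ) ≤ 1 / Real.sqrt (1 - 2 * (-s)) := by positivity
    rw [← ENNReal.ofReal_pow hc0, ← ENNReal.ofReal_mul (Real.exp_pos _).le]
    apply ENNReal.ofReal_le_ofReal
    have h1m2l : 1 - 2 * (-s) = 1 + 2 * s := by ring
    rw [h1m2l]
    -- per-coordinate bound : 1/√(1+2s) ≤ exp (-(s - s²))
    set t := s - s ^ 2 with hT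
    have hexp_le : Real.exp t ≤ Real.sqrt (1 + 2 * s) := by
      have hlog := lm_le_log s hs.le
      have hle : Real.exp (2 * t) ≤ 1 + 2 * s := by
        calc Real.exp (2 * t) ≤ Real.exp (Real.log (1 + 2 * s)) := by
              apply Real.exp_le_exp.2; rw [hT]; linarith
          _ = 1 + 2 * s := Real.exp_log h12s
      have := Real.sqrt_le_sqrt hle
      calc Real.exp t = Real.sqrt (Real.exp (2 * t)) := by
            rw [show (2:ℝ) * t = t + t by ring, Real.exp_add,
              Real.sqrt_mul_self (Real.exp_pos t).le]
        _ ≤ Real.sqrt (1 + 2 * s) := this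
    have hkey : 1 / Real.sqrt (1 + 2 * s) ≤ Real.exp (-t) := by
      rw [Real.exp_neg]
      rw [one_div]
      exact inv_anti₀ (Real.exp_pos t) hexp_le
    have hpow : (1 / Real.sqrt (1 + 2 * s)) ^ d ≤ Real.exp (-t) ^ d :=
      pow_le_pow_left₀ (by positivity) hkey d
    calc Real.exp (-(-s * a)) * (1 / Real.sqrt (1 + 2 * s)) ^ d
        ≤ Real.exp (-(-s * a)) * Real.exp (-t) ^ d := by
          exact mul_le_mul_of_nonneg_left hpow (Real.exp_pos _).le
      _ = Real.exp (-(-s * a) + d * (-t)) := by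
          rw [← Real.exp_nat_mul, ← Real.exp_add]
      _ = Real.exp (-(x * d)) := by
          congr 1
          rw [ha, hT, ← hs2]; ring
end
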